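/- There exist a 1-smooth function f : ℝ → ℝ bounded below, and an unbiased stochastic gradient g, such that no constants α, β ≥ 0 satisfy E‖g(x)‖² ≤ α‖∇f(x)‖² + β for all x, yet there do exist constants A, C ≥ 0 with E‖g(x)‖² ≤ 2A(f(x) − inf f) + C for all x. Concretely, take f(x) = x²/2 for |x| < 1 and |x| − 1/2 otherwise, and g(x) = ∇f(x) ± √|x| with equal probability. -/

import Mathlib

noncomputable def myf : ℝ → ℝ := fun x => if |x| < 1 then x ^ 2 / 2 else |x| - 1 / 2
noncomputable def myd : ℝ → ℝ := fun x => max (-1) (min 1 x)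

lemma myf_eq_sq {y : ℝ} (h1 : -1 ≤ y) (h2 : y ≤ 1) : myf y = y ^ 2 / 2 := by
  unfold myf
  rcases eq_or_lt_of_le h1 with h | h1
  · rw [← h]; norm_num
  rcases lt_or_eq_of_le h2 with h | h
  · rw [if_pos (abs_lt.2 ⟨h1, h⟩)]
  · subst h; norm_num

lemma myf_eq_right {y : ℝ} (h : 1 ≤ y) : myf y = y - 1 / 2 := by
  unfold myf
  rw [if_neg, abs_of_nonneg (by linarith)]
  rw [abs_of_nonneg (by linarith)]; push_neg; linarith

lemma myf_eq_left {y : ℝ} (h : y ≤ -1) : myf y = -y - 1 / 2 := by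
  unfold myf
  rw [if_neg, abs_of_nonpos (by linarith)]
  rw [abs_of_nonpos (by linarith)]; push_neg; linarith

lemma hasDerivAt_myf (x : ℝ) : HasDerivAt myf (myd x) x := by
  rcases lt_trichotomy x 1 with hx1 | hx1 | hx1
  · rcases lt_trichotomy x (-1) with hxm | hxm | hxm
    · -- x < -1
      have hd : myd x = -1 := by
        unfold myd; rw [min_eq_right (by linarith), max_eq_left (by linarith)]
      rw [hd]
      have h : HasDerivAt (fun y : ℝ => -y - 1 / 2) (-1) x := by
        simpa using ((hasDerivAt_id x).neg.sub_const (1/2))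
      refine h.congr_of_eventuallyEq ?_
      filter_upwards [eventually_lt_nhds hxm] with y hy
      exact myf_eq_left hy.le
    · -- x = -1
      subst hxm
      have hd : myd (-1) = -1 := by
        unfold myd; rw [min_eq_right (by norm_num), max_eq_left le_rfl]
      rw [hd]
      have hleft : HasDerivWithinAt myf (-1) (Set.Iic (-1)) (-1) := by
        have h : HasDerivAt (fun y : ℝ => -y - 1 / 2) (-1) (-1) := by
          simpa using ((hasDerivAt_id (-1:ℝ)).neg.sub_const (1/2))
        refine (h.hasDerivWithinAt).congr_of_eventuallyEq ?_ (by rw [myf_eq_left le_rfl])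
        filter_upwards [self_mem_nhdsWithin] with y hy
        exact myf_eq_left hy
      have hright : HasDerivWithinAt myf (-1) (Set.Ici (-1)) (-1) := by
        have h : HasDerivAt (fun y : ℝ => y ^ 2 / 2) (-1) (-1) := by
          have : HasDerivAt (fun y : ℝ => y ^ 2 / 2) (((2:ℕ):ℝ) * (-1:ℝ) ^ (2 - 1) / 2) (-1) :=
            (hasDerivAt_pow 2 (-1:ℝ)).div_const 2
          convert this using 1; norm_num
        refine (h.hasDerivWithinAt).congr_of_eventuallyEq ?_
          (by rw [myf_eq_sq le_rfl (by norm_num)])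
        filter_upwards [self_mem_nhdsWithin,
          nhdsWithin_le_nhds (eventually_lt_nhds (show (-1:ℝ) < 1 by norm_num))] with y hy hy'
        exact myf_eq_sq hy hy'.le
      have := hleft.union hright
      rw [Set.Iic_union_Ici] at this
      exact hasDerivWithinAt_univ.mp this
    · -- -1 < x < 1
      have hd : myd x = x := by
        unfold myd; rw [min_eq_right hx1.le, max_eq_right hxm.le]
      rw [hd]
      have h : HasDerivAt (fun y : ℝ => y ^ 2 / 2) x x := by
        have : HasDerivAt (fun y : ℝ => y ^ 2 / 2) (((2:ℕ):ℝ) * x ^ (2 - 1) / 2) x :=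
          (hasDerivAt_pow 2 x).div_const 2
        convert this using 1; norm_num
      refine h.congr_of_eventuallyEq ?_
      filter_upwards [eventually_lt_nhds hx1, eventually_gt_nhds hxm] with y hy hy'
      exact myf_eq_sq hy'.le hy.le
  · -- x = 1
    subst hx1
    have hd : myd 1 = 1 := by
      unfold myd; rw [min_eq_left le_rfl, max_eq_right (by norm_num)]
    rw [hd]
    have hleft : HasDerivWithinAt myf 1 (Set.Iic 1) 1 := by
      have h : HasDerivAt (fun y : ℝ => y ^ 2 / 2) 1 1 := by
        have : HasDerivAt (fun y : ℝ => y ^ 2 / 2) (((2:ℕ):ℝ) * (1:ℝ) ^ (2 - 1) / 2) 1 :=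
          (hasDerivAt_pow 2 (1:ℝ)).div_const 2
        convert this using 1; norm_num
      refine (h.hasDerivWithinAt).congr_of_eventuallyEq ?_
        (by rw [myf_eq_sq (by norm_num) le_rfl])
      filter_upwards [self_mem_nhdsWithin,
        nhdsWithin_le_nhds (eventually_gt_nhds (show (-1:ℝ) < 1 by norm_num))] with y hy hy'
      exact myf_eq_sq hy'.le hy
    have hright : HasDerivWithinAt myf 1 (Set.Ici 1) 1 := by
      have h : HasDerivAt (fun y : ℝ => y - 1 / 2) 1 1 := by
        simpa using ((hasDerivAt_id (1:ℝ)).sub_const (1/2))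
      refine (h.hasDerivWithinAt).congr_of_eventuallyEq ?_ (by rw [myf_eq_right le_rfl])
      filter_upwards [self_mem_nhdsWithin] with y hy
      exact myf_eq_right hy
    have := hleft.union hright
    rw [Set.Iic_union_Ici] at this
    exact hasDerivWithinAt_univ.mp this
  · -- x > 1
    have hd : myd x = 1 := by
      unfold myd; rw [min_eq_left hx1.le, max_eq_right (by norm_num)]
    rw [hd]
    have h : HasDerivAt (fun y : ℝ => y - 1 / 2) 1 x := by
      simpa using ((hasDerivAt_id x).sub_const (1/2))
    refine h.congr_of_eventuallyEq ?_
    filter_upwards [eventually_gt_nhds hx1] with y hy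
    exact myf_eq_right hy.le

lemma min_lip (x y : ℝ) : |min 1 x - min 1 y| ≤ |x - y| := by
  rcases le_total x 1 with hx | hx <;> rcases le_total y 1 with hy | hy
  · rw [min_eq_right hx, min_eq_right hy]
  · rw [min_eq_right hx, min_eq_left hy]
    rcases abs_cases (x - y) with ⟨h, _⟩ | ⟨h, _⟩ <;>
      [rw [abs_of_nonpos (by linarith)]; rw [abs_of_nonpos (by linarith)]] <;> linarith
  · rw [min_eq_left hx, min_eq_right hy]
    rcases abs_cases (x - y) with ⟨h, _⟩ | ⟨h, _⟩ <;>
      [rw [abs_of_nonneg (by linarith)]; rw [abs_of_nonneg (by linarith)]] <;> linarith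
  · rw [min_eq_left hx, min_eq_left hy]; simp [abs_nonneg]

lemma myd_lip (x y : ℝ) : |myd x - myd y| ≤ |x - y| := by
  unfold myd
  have h1 : |max (-1) (min 1 x) - max (-1) (min 1 y)| ≤ |min 1 x - min 1 y| := by
    simpa [max_comm] using abs_max_sub_max_le_abs (min 1 x) (min 1 y) (-1)
  exact h1.trans (min_lip x y)

lemma myf_nonneg (x : ℝ) : 0 ≤ myf x := by
  unfold myf; split_ifs with h
  · positivity
  · push_neg at h; linarith

theorem stmt9 :
    ∃ f : ℝ → ℝ,
      (f = fun x => if |x| < 1 then x ^ 2 / 2 else |x| - 1 / 2) ∧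
      Differentiable ℝ f ∧
      (∀ x y, |deriv f x - deriv f y| ≤ 1 * |x - y|) ∧
      BddBelow (Set.range f) ∧
      (¬ ∃ α β : ℝ, 0 ≤ α ∧ 0 ≤ β ∧ ∀ x,
        (1 / 2) * (deriv f x + Real.sqrt |x|) ^ 2
          + (1 / 2) * (deriv f x - Real.sqrt |x|) ^ 2
          ≤ α * (deriv f x) ^ 2 + β) ∧
      (∃ A C : ℝ, 0 ≤ A ∧ 0 ≤ C ∧ ∀ x,
        (1 / 2) * (deriv f x + Real.sqrt |x|) ^ 2
          + (1 / 2) * (deriv f x - Real.sqrt |x|) ^ 2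
          ≤ 2 * A * (f x - sInf (Set.range f)) + C) := by
  have hderiv : ∀ x, deriv myf x = myd x := fun x => (hasDerivAt_myf x).deriv
  have hbdd : BddBelow (Set.range myf) := ⟨0, by rintro _ ⟨x, rfl⟩; exact myf_nonneg x⟩
  have hinf : sInf (Set.range myf) = 0 := by
    apply le_antisymm
    · have h0 : myf 0 = 0 := by unfold myf; norm_num
      exact h0 ▸ csInf_le hbdd ⟨0, rfl⟩
    · exact le_csInf ⟨myf 0, ⟨0, rfl⟩⟩ (by rintro _ ⟨x, rfl⟩; exact myf_nonneg x)
  refine ⟨myf, rfl, fun x => (hasDerivAt_myf x).differentiableAt, ?_, hbdd, ?_, 1, 2, ?_⟩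
  · intro x y; rw [hderiv, hderiv, one_mul]; exact myd_lip x y
  · rintro ⟨α, β, hα, hβ, h⟩
    set x := max 1 (α + β) with hxdef
    have hx1 : (1 : ℝ) ≤ x := le_max_left _ _
    have hx2 : α + β ≤ x := le_max_right _ _
    have hd : deriv myf x = 1 := by
      rw [hderiv]; unfold myd
      rw [min_eq_left hx1, max_eq_right (by norm_num)]
    have hs : Real.sqrt |x| ^ 2 = x := by
      rw [Real.sq_sqrt (abs_nonneg x), abs_of_nonneg (by linarith)]
    have := h x
    rw [hd] at this
    nlinarith [this, hs, hx1, hx2]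
  · refine ⟨zero_le_one, by norm_num, fun x => ?_⟩
    rw [hderiv, hinf]
    have hs : Real.sqrt |x| ^ 2 = |x| := Real.sq_sqrt (abs_nonneg x)
    by_cases hlt : |x| < 1
    · obtain ⟨h1, h2⟩ := abs_lt.1 hlt
      have hd : myd x = x := by
        unfold myd; rw [min_eq_right h2.le, max_eq_right h1.le]
      have hf : myf x = x ^ 2 / 2 := by unfold myf; rw [if_pos hlt]
      rw [hd, hf]
      nlinarith [hs, abs_nonneg x, hlt, sq_abs x]
    · push_neg at hlt
      have hf : myf x = |x| - 1 / 2 := by unfold myf; rw [if_neg (not_lt.2 hlt)]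
      have hd2 : myd x ^ 2 = 1 := by
        rcases le_abs'.1 hlt with h | h
        · have : myd x = -1 := by
            unfold myd; rw [min_eq_right (by linarith), max_eq_left (by linarith)]
          rw [this]; norm_num
        · have : myd x = 1 := by
            unfold myd; rw [min_eq_left h, max_eq_right (by norm_num)]
          rw [this]; norm_num
      rw [hf]
      nlinarith [hs, hd2, abs_nonneg x]
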